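/- In a Gaussian linear structural equation model with true DAG G* and true ordering σ* for which error variances are weakly increasing, if a permutation σ is not consistent with G* then ∑_j ω_j^σ > ∑_j ω_j^{σ*}; i.e., the minimum-trace permutation set equals exactly the set of orderings consistent with G*. -/

import Mathlib

open Matrix BigOperators Finset

/-- Conditional variance of coordinate `j` of a centered Gaussian vector with covariance `S`,
given the coordinates in the index set `A`, i.e. the Schur complement
`S j j - S_{jA} (S_{AA})⁻¹ S_{Aj}`. -/
noncomputable def condVar {p : ℕ} (S : Matrix (Fin p) (Fin p) ℝ) (j : Fin p)
    (A : Finset (Fin p)) : ℝ :=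
  S j j - ∑ s : A, ∑ t : A,
    S j s.1 * (Matrix.of fun a b : A => S a.1 b.1)⁻¹ s t * S t.1 j

/-- The set of predecessors of node `j` under the ordering `σ`. -/
def PRED {p : ℕ} (σ : Equiv.Perm (Fin p)) (j : Fin p) : Finset (Fin p) :=
  Finset.univ.filter fun i => σ.symm i < σ.symm j

/-- `σ` is consistent with the DAG encoded by the weighted adjacency matrix `B`:
every edge `i → j` (i.e. `B i j ≠ 0`) goes forward in the ordering `σ`. -/
def Consistent {p : ℕ} (B : Matrix (Fin p) (Fin p) ℝ) (σ : Equiv.Perm (Fin p)) : Prop :=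
  ∀ i j, B i j ≠ 0 → σ.symm i < σ.symm j

/-- The covariance matrix `Σ = (I - Bᵀ)⁻¹ Ω (I - B)⁻¹` of the Gaussian linear SEM
`X = Bᵀ X + ε`, `ε ~ N(0, Ω)` with `Ω = diag ω`. -/
noncomputable def modelCov {p : ℕ} (B : Matrix (Fin p) (Fin p) ℝ) (ω : Fin p → ℝ) :
    Matrix (Fin p) (Fin p) ℝ :=
  (1 - B.transpose)⁻¹ * Matrix.diagonal ω * (1 - B)⁻¹

namespace S11

variable {p : ℕ} {B : Matrix (Fin p) (Fin p) ℝ} {ω : Fin p → ℝ} {σs : Equiv.Perm (Fin p)}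

noncomputable def ip {p : ℕ} (x y : Fin p → ℝ) : ℝ := ∑ i, x i * y i

def anc {p : ℕ} (B : Matrix (Fin p) (Fin p) ℝ) (R : Finset (Fin p)) : Prop :=
  ∀ a b, B a b ≠ 0 → b ∈ R → a ∈ R

noncomputable def MM {p : ℕ} (B : Matrix (Fin p) (Fin p) ℝ) :
    Matrix (Fin p) (Fin p) ℝ := (1 - B)⁻¹

noncomputable def mvec {p : ℕ} (B : Matrix (Fin p) (Fin p) ℝ) (ω : Fin p → ℝ) (j : Fin p) :
    Fin p → ℝ := fun i => Real.sqrt (ω i) * MM B i j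

noncomputable def U {p : ℕ} (B : Matrix (Fin p) (Fin p) ℝ) (ω : Fin p → ℝ)
    (A : Finset (Fin p)) : Submodule ℝ (Fin p → ℝ) :=
  Submodule.span ℝ (↑(A.image (mvec B ω)) : Set (Fin p → ℝ))

noncomputable def canon {p : ℕ} (B : Matrix (Fin p) (Fin p) ℝ) (ω : Fin p → ℝ)
    (σs : Equiv.Perm (Fin p)) (R : Finset (Fin p)) : ℝ :=
  ∏ i ∈ R, condVar (modelCov B ω) i (R ∩ PRED σs i)

noncomputable def wf {p : ℕ} (B : Matrix (Fin p) (Fin p) ℝ) (ω : Fin p → ℝ)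
    (σs : Equiv.Perm (Fin p)) (i : Fin p) : ℝ :=
  condVar (modelCov B ω) i (PRED σs i)

noncomputable def df {p : ℕ} (B : Matrix (Fin p) (Fin p) ℝ) (ω : Fin p → ℝ)
    (σs : Equiv.Perm (Fin p)) (R : Finset (Fin p)) (i : Fin p) : ℝ :=
  condVar (modelCov B ω) i (R ∩ PRED σs i)

lemma ip_comm (x y : Fin p → ℝ) : ip x y = ip y x := by
  unfold ip; congr 1; ext i; ring

lemma ip_add_left (x y z : Fin p → ℝ) : ip (x + y) z = ip x z + ip y z := by
  unfold ip; rw [← Finset.sum_add_distrib]; congr 1; ext i; simp [Pi.add_apply]; ring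

lemma ip_sub_left (x y z : Fin p → ℝ) : ip (x - y) z = ip x z - ip y z := by
  unfold ip; rw [← Finset.sum_sub_distrib]; congr 1; ext i; simp [Pi.sub_apply]; ring

lemma ip_smul_left (c : ℝ) (x z : Fin p → ℝ) : ip (c • x) z = c * ip x z := by
  unfold ip; rw [Finset.mul_sum]; congr 1; ext i; simp [Pi.smul_apply]; ring

lemma ip_zero_left (z : Fin p → ℝ) : ip 0 z = 0 := by simp [ip]

lemma ip_sum_left {α : Type*} [DecidableEq α] (s : Finset α) (f : α → ℝ) (v : α → Fin p → ℝ) (z : Fin p → ℝ) :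
    ip (∑ a ∈ s, f a • v a) z = ∑ a ∈ s, f a * ip (v a) z := by
  induction s using Finset.induction_on with
  | empty => simp [ip_zero_left]
  | insert _ _ h ih => rw [Finset.sum_insert h, ip_add_left, ip_smul_left, ih, Finset.sum_insert h]

lemma ip_self_nonneg (x : Fin p → ℝ) : 0 ≤ ip x x :=
  Finset.sum_nonneg fun i _ => mul_self_nonneg _

lemma ip_self_eq_zero {x : Fin p → ℝ} (h : ip x x = 0) : x = 0 := by
  funext i
  have := (Finset.sum_eq_zero_iff_of_nonneg (fun i _ => mul_self_nonneg (x i))).1 h i (Finset.mem_univ _)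
  exact mul_self_eq_zero.1 this

/-- orthogonality extends from generators to span -/
lemma perp_span {ζ : Fin p → ℝ} {s : Set (Fin p → ℝ)} (h : ∀ v ∈ s, ip v ζ = 0) :
    ∀ x ∈ Submodule.span ℝ s, ip x ζ = 0 := by
  intro x hx
  induction hx using Submodule.span_induction with
  | mem v hv => exact h _ hv
  | zero => exact ip_zero_left ζ
  | add a b _ _ ha hb => rw [ip_add_left, ha, hb, add_zero]
  | smul c a _ ha => rw [ip_smul_left, ha, mul_zero]

lemma hBT (hσs : Consistent B σs) : B.BlockTriangular σs.symm := by
  intro i j h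
  by_contra hB
  exact absurd (hσs _ _ hB) (not_lt.2 h.le)

lemma oneSubBT (hσs : Consistent B σs) : (1 - B).BlockTriangular σs.symm :=
  Matrix.blockTriangular_one.sub (hBT hσs)

lemma Bjj (hσs : Consistent B σs) (j : Fin p) : B j j = 0 := by
  by_contra h
  exact absurd (hσs _ _ h) (lt_irrefl _)

lemma det_oneSubB (hσs : Consistent B σs) : (1 - B).det = 1 := by
  rw [(oneSubBT hσs).det_fintype]
  have : ∀ k : Fin p, ((1 - B).toSquareBlock σs.symm k).det = 1 := by
    intro k
    have hcard : ∀ i j : { a // σs.symm a = k }, i = j := by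
      rintro ⟨i, hi⟩ ⟨j, hj⟩
      have : i = j := σs.symm.injective (hi.trans hj.symm)
      simpa using this
    have : ((1 - B).toSquareBlock σs.symm k) = 1 := by
      ext i j
      rw [hcard i j]
      simp [Matrix.toSquareBlock_def, Matrix.one_apply, Bjj hσs]
    rw [this, Matrix.det_one]
  simp [this]

lemma isUnit_det_oneSubB (hσs : Consistent B σs) : IsUnit (1 - B).det := by
  rw [det_oneSubB hσs]; exact isUnit_one

lemma hMl (hσs : Consistent B σs) : (1 - B) * MM B = 1 :=
  Matrix.mul_nonsing_inv _ (isUnit_det_oneSubB hσs)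

lemma hMr (hσs : Consistent B σs) : MM B * (1 - B) = 1 :=
  Matrix.nonsing_inv_mul _ (isUnit_det_oneSubB hσs)

lemma modelCov_apply (hσs : Consistent B σs) (i j : Fin p) :
    modelCov B ω i j = ∑ k, ω k * (MM B k i * MM B k j) := by
  have h1 : (1 - B.transpose) = (1 - B).transpose := by
    rw [Matrix.transpose_sub, Matrix.transpose_one]
  have h2 : (1 - B.transpose)⁻¹ = (MM B).transpose := by
    rw [h1, ← Matrix.transpose_nonsing_inv]; rfl
  rw [modelCov, h2]
  rw [Matrix.mul_apply]
  unfold MM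
  simp [Matrix.mul_apply, Matrix.diagonal, Matrix.transpose_apply, Finset.mul_sum]
  congr 1; ext k
  ring

lemma ip_mvec (hσs : Consistent B σs) (hω : ∀ j, 0 < ω j) (a b : Fin p) :
    ip (mvec B ω a) (mvec B ω b) = modelCov B ω a b := by
  rw [modelCov_apply hσs, ip]
  congr 1; ext i
  have : Real.sqrt (ω i) * Real.sqrt (ω i) = ω i := Real.mul_self_sqrt (hω i).le
  simp only [mvec]
  calc √(ω i) * MM B i a * (√(ω i) * MM B i b)
      = (√(ω i) * √(ω i)) * (MM B i a * MM B i b) := by ring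
    _ = ω i * (MM B i a * MM B i b) := by rw [this]

lemma modelCov_symm (hσs : Consistent B σs) (a b : Fin p) :
    modelCov B ω a b = modelCov B ω b a := by
  rw [modelCov_apply hσs, modelCov_apply hσs]
  congr 1; ext k; ring

/-- key linear independence statement -/
lemma mvec_sum_eq_zero (hσs : Consistent B σs) (hω : ∀ j, 0 < ω j)
    (g : Fin p → ℝ) (h : ∑ l, g l • mvec B ω l = 0) : g = 0 := by
  have hMg : MM B *ᵥ g = 0 := by
    funext i
    have hi := congrFun h i
    simp only [Finset.sum_apply, Pi.smul_apply, Pi.zero_apply, smul_eq_mul, mvec] at hi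
    have : Real.sqrt (ω i) * ∑ l, MM B i l * g l = 0 := by
      rw [Finset.mul_sum]
      rw [← hi]
      congr 1; ext l; ring
    have hs : Real.sqrt (ω i) ≠ 0 := by
      have := Real.sqrt_pos.2 (hω i)
      exact ne_of_gt this
    have := mul_eq_zero.1 this
    rcases this with h' | h'
    · exact absurd h' hs
    · simpa [Matrix.mulVec, dotProduct] using h'
  have : ((1 - B) * MM B) *ᵥ g = 0 := by
    rw [← Matrix.mulVec_mulVec, hMg, Matrix.mulVec_zero]
  rwa [hMl hσs, Matrix.one_mulVec] at this

lemma mvec_injective (hσs : Consistent B σs) (hω : ∀ j, 0 < ω j) :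
    Function.Injective (mvec B ω) := by
  intro a b hab
  by_contra hne
  have : ∑ l, (fun l => if l = a then (1:ℝ) else if l = b then -1 else 0) l • mvec B ω l = 0 := by
    rw [Finset.sum_eq_add_of_mem a b (Finset.mem_univ _) (Finset.mem_univ _) hne]
    · have hba : b ≠ a := fun h => hne h.symm
      simp [hne, hba, hab]
    · intro c _ hc
      simp [hc.1, hc.2]
  have := congrFun (mvec_sum_eq_zero hσs hω _ this) a
  simp at this

lemma mvec_mem_U {A : Finset (Fin p)} {a : Fin p} (ha : a ∈ A) : mvec B ω a ∈ U B ω A := by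
  apply Submodule.subset_span
  simp only [Finset.coe_image, Set.mem_image, Finset.mem_coe]
  exact ⟨a, ha, rfl⟩

lemma U_mono {A A' : Finset (Fin p)} (h : A ⊆ A') : U B ω A ≤ U B ω A' :=
  Submodule.span_mono (by simp only [Finset.coe_image]; exact Set.image_mono (by exact_mod_cast h))

lemma perp_U {A : Finset (Fin p)} {ζ : Fin p → ℝ}
    (h : ∀ a ∈ A, ip (mvec B ω a) ζ = 0) : ∀ x ∈ U B ω A, ip x ζ = 0 := by
  apply perp_span
  intro v hv
  simp only [Finset.coe_image, Set.mem_image, Finset.mem_coe] at hv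
  obtain ⟨b, hb, rfl⟩ := hv
  exact h b hb

/-- The Gram submatrix is nonsingular. -/
lemma gram_isUnit (hσs : Consistent B σs) (hω : ∀ j, 0 < ω j) (A : Finset (Fin p)) :
    IsUnit (Matrix.of fun a b : A => modelCov B ω a.1 b.1).det := by
  set G : Matrix A A ℝ := Matrix.of fun a b : A => modelCov B ω a.1 b.1 with hG
  rw [isUnit_iff_ne_zero]
  intro h0
  obtain ⟨v, hv0, hGv⟩ := (Matrix.exists_mulVec_eq_zero_iff (M := G)).2 h0
  set yv : Fin p → ℝ := ∑ a : A, v a • mvec B ω a.1 with hyv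
  have hya : ∀ b : A, ip yv (mvec B ω b.1) = 0 := by
    intro b
    rw [hyv, ip_sum_left]
    have heq : ∀ a : A, v a * ip (mvec B ω a.1) (mvec B ω b.1) = G b a * v a := by
      intro a
      rw [ip_mvec hσs hω, hG]
      simp only [Matrix.of_apply]
      rw [modelCov_symm hσs]
      ring
    rw [Finset.sum_congr rfl fun a _ => heq a]
    have := congrFun hGv b
    simpa [Matrix.mulVec, dotProduct] using this
  have hyy : ip yv yv = 0 := by
    rw [hyv, ip_sum_left]
    apply Finset.sum_eq_zero
    intro a _
    rw [← hyv, ip_comm (mvec B ω a.1) yv, hya a, mul_zero]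
  have hy0 : yv = 0 := ip_self_eq_zero hyy
  set g : Fin p → ℝ := fun l => if h : l ∈ A then v ⟨l, h⟩ else 0 with hg
  have hsum : ∑ l, g l • mvec B ω l = yv := by
    have h1 : ∑ l, g l • mvec B ω l = ∑ l ∈ A, g l • mvec B ω l := by
      symm
      apply Finset.sum_subset (Finset.subset_univ A)
      intro x _ hx
      rw [hg]; simp [hx]
    rw [h1, hyv, ← Finset.sum_coe_sort A (fun l => g l • mvec B ω l)]
    apply Finset.sum_congr rfl
    intro a _
    rw [hg]
    simp [a.2]
  have hgz : g = 0 := mvec_sum_eq_zero hσs hω g (by rw [hsum, hy0])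
  apply hv0
  funext a
  have := congrFun hgz a.1
  rw [hg] at this
  simpa [a.2] using this

/-- Existence of the optimal approximation: bridge between condVar and geometry. -/
lemma exists_opt (hσs : Consistent B σs) (hω : ∀ j, 0 < ω j) (A : Finset (Fin p)) (j : Fin p) :
    ∃ u ∈ U B ω A, (∀ x ∈ U B ω A, ip x (mvec B ω j - u) = 0) ∧
      condVar (modelCov B ω) j A = ip (mvec B ω j - u) (mvec B ω j - u) := by
  set G : Matrix A A ℝ := Matrix.of fun a b : A => modelCov B ω a.1 b.1 with hG
  set y : A → ℝ := fun t => modelCov B ω t.1 j with hy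
  set c : A → ℝ := G⁻¹ *ᵥ y with hc
  set u : Fin p → ℝ := ∑ a : A, c a • mvec B ω a.1 with hu
  have hGc : G *ᵥ c = y := by
    rw [hc, Matrix.mulVec_mulVec, Matrix.mul_nonsing_inv _ (gram_isUnit hσs hω A),
      Matrix.one_mulVec]
  have humem : u ∈ U B ω A := by
    rw [hu]
    exact Submodule.sum_smul_mem _ _ fun a _ => mvec_mem_U a.2
  have hipu : ∀ b : A, ip u (mvec B ω b.1) = modelCov B ω b.1 j := by
    intro b
    rw [hu, ip_sum_left]
    have heq : ∀ a : A, c a * ip (mvec B ω a.1) (mvec B ω b.1) = G b a * c a := by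
      intro a
      rw [ip_mvec hσs hω, hG]
      simp only [Matrix.of_apply]
      rw [modelCov_symm hσs]
      ring
    rw [Finset.sum_congr rfl fun a _ => heq a]
    have := congrFun hGc b
    simpa [Matrix.mulVec, dotProduct, hy] using this
  have hperpgen : ∀ b : A, ip (mvec B ω b.1) (mvec B ω j - u) = 0 := by
    intro b
    rw [ip_comm, ip_sub_left, ip_comm, ip_mvec hσs hω, hipu b, sub_self]
  have hperp : ∀ x ∈ U B ω A, ip x (mvec B ω j - u) = 0 :=
    perp_U fun a ha => hperpgen ⟨a, ha⟩
  refine ⟨u, humem, hperp, ?_⟩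
  have hval : ip (mvec B ω j - u) (mvec B ω j - u) =
      modelCov B ω j j - ∑ a : A, c a * modelCov B ω a.1 j := by
    have h2 : ip u (mvec B ω j - u) = 0 := hperp u humem
    rw [ip_sub_left, h2, sub_zero, ip_comm (mvec B ω j) (mvec B ω j - u), ip_sub_left,
      ip_mvec hσs hω]
    congr 1
    rw [hu, ip_sum_left]
    apply Finset.sum_congr rfl
    intro a _
    rw [ip_mvec hσs hω]
  rw [hval]
  show modelCov B ω j j - ∑ s : A, ∑ t : A,
      modelCov B ω j s.1 * G⁻¹ s t * modelCov B ω t.1 j = _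
  congr 1
  have hrow : ∀ s : A, ∑ t : A, modelCov B ω j s.1 * G⁻¹ s t * modelCov B ω t.1 j
      = modelCov B ω j s.1 * c s := by
    intro s
    have hc' : c s = ∑ t : A, G⁻¹ s t * y t := by
      rw [hc]; simp [Matrix.mulVec, dotProduct]
    rw [hc', Finset.mul_sum]
    apply Finset.sum_congr rfl
    intro t _
    rw [hy]
    ring
  rw [Finset.sum_congr rfl fun s _ => hrow s]
  apply Finset.sum_congr rfl
  intro s _
  rw [modelCov_symm hσs j s.1]
  ring
/-- characterization: any perpendicular decomposition computes condVar -/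
lemma condVar_eq_of_perp (hσs : Consistent B σs) (hω : ∀ j, 0 < ω j)
    {A : Finset (Fin p)} {j : Fin p} {u : Fin p → ℝ} (hu : u ∈ U B ω A)
    (hperp : ∀ x ∈ U B ω A, ip x (mvec B ω j - u) = 0) :
    condVar (modelCov B ω) j A = ip (mvec B ω j - u) (mvec B ω j - u) := by
  obtain ⟨u0, h0mem, h0perp, h0val⟩ := exists_opt hσs hω A j
  set m := mvec B ω j
  set d : Fin p → ℝ := u0 - u with hd
  have hdU : d ∈ U B ω A := Submodule.sub_mem _ h0mem hu
  have key : ∀ (dd r r' : Fin p → ℝ), r = r' + dd → ip dd r' = 0 →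
      ip r r = ip r' r' + ip dd dd := by
    intro dd r r' hr hperp'
    have h' : ip r' dd = 0 := by rw [ip_comm]; exact hperp'
    have e : ip (r' + dd) (r' + dd) = ip r' r' + ip dd r' + (ip r' dd + ip dd dd) := by
      rw [ip_add_left, ip_comm r' (r' + dd), ip_add_left, ip_comm dd (r' + dd), ip_add_left]
    rw [hr, e, hperp', h']
    ring
  have h1 : m - u = (m - u0) + d := by rw [hd]; abel
  have h2 : m - u0 = (m - u) + (-d) := by rw [hd]; abel
  have e1 : ip (m - u) (m - u) = ip (m - u0) (m - u0) + ip d d :=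
    key _ _ _ h1 (h0perp d hdU)
  have e2 : ip (m - u0) (m - u0) = ip (m - u) (m - u) + ip (-d) (-d) := by
    apply key _ _ _ h2
    exact hperp (-d) (Submodule.neg_mem _ hdU)
  have hnd : ip (-d) (-d) = ip d d := by
    have : (-d : Fin p → ℝ) = (-1 : ℝ) • d := by funext i; simp
    rw [this, ip_smul_left, ip_comm, ip_smul_left]
    ring
  rw [hnd] at e2
  have : ip d d = 0 := by linarith
  rw [h0val, e1, this, add_zero]

lemma condVar_mono (hσs : Consistent B σs) (hω : ∀ j, 0 < ω j)
    {A A' : Finset (Fin p)} (hsub : A ⊆ A') (j : Fin p) :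
    condVar (modelCov B ω) j A' ≤ condVar (modelCov B ω) j A := by
  obtain ⟨u, humem, hperp, hval⟩ := exists_opt hσs hω A j
  obtain ⟨u', humem', hperp', hval'⟩ := exists_opt hσs hω A' j
  set m := mvec B ω j
  set d : Fin p → ℝ := u' - u with hd
  have hdU : d ∈ U B ω A' := Submodule.sub_mem _ humem' (U_mono hsub humem)
  have h1 : m - u = (m - u') + d := by rw [hd]; abel
  have e1 : ip (m - u) (m - u) = ip (m - u') (m - u') + ip d d := by
    have h' : ip (m - u') d = 0 := by rw [ip_comm]; exact hperp' d hdU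
    have e : ip ((m - u') + d) ((m - u') + d)
        = ip (m - u') (m - u') + ip d (m - u') + (ip (m - u') d + ip d d) := by
      rw [ip_add_left, ip_comm (m - u') ((m - u') + d), ip_add_left,
        ip_comm d ((m - u') + d), ip_add_left]
    rw [h1, e, hperp' d hdU, h']
    ring
  rw [hval, hval', e1]
  have := ip_self_nonneg d
  linarith

/-- M vanishes outside an ancestral block. -/
lemma M_zero_of_anc (hσs : Consistent B σs) {R : Finset (Fin p)} (hR : anc B R)
    {i a : Fin p} (hi : i ∉ R) (ha : a ∈ R) : MM B i a = 0 := by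
  classical
  set b : Fin p → ℕ := fun x => if x ∈ R then 0 else 1 with hb
  have hBT : (1 - B).BlockTriangular b := by
    intro x y hxy
    have hyR : y ∈ R := by
      by_contra hy
      simp only [hb, hy, if_false] at hxy
      by_cases hx : x ∈ R <;> simp [hx] at hxy
    have hxR : x ∉ R := by
      by_contra hx
      simp [hb, hx, hyR] at hxy
    have hxy' : x ≠ y := fun h => hxR (h ▸ hyR)
    have hBxy : B x y = 0 := by
      by_contra h
      exact hxR (hR x y h hyR)
    simp [Matrix.sub_apply, Matrix.one_apply_ne hxy', hBxy]
  haveI : Invertible (1 - B) := (1 - B).invertibleOfIsUnitDet (isUnit_det_oneSubB hσs)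
  have hMT : ((1 - B)⁻¹).BlockTriangular b :=
    Matrix.blockTriangular_inv_of_blockTriangular hBT
  apply hMT
  simp [hb, hi, ha]

lemma evec_eq (hσs : Consistent B σs) (i : Fin p) :
    (fun k => if k = i then Real.sqrt (ω i) else 0) =
      mvec B ω i - ∑ l, B l i • mvec B ω l := by
  funext k
  have h1 : (∑ l, B l i • mvec B ω l) k = Real.sqrt (ω k) * ∑ l, MM B k l * B l i := by
    rw [Finset.mul_sum]
    simp only [Finset.sum_apply, Pi.smul_apply, smul_eq_mul, mvec]
    apply Finset.sum_congr rfl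
    intro l _
    ring
  have h2 : ∑ l, MM B k l * (1 - B) l i = (1 : Matrix (Fin p) (Fin p) ℝ) k i := by
    have := congrFun (congrFun (hMr hσs) k) i
    simpa [Matrix.mul_apply] using this
  have h3 : ∑ l, MM B k l * (1 - B) l i = MM B k i - ∑ l, MM B k l * B l i := by
    have heach : ∀ l : Fin p, MM B k l * (1 - B) l i
        = (if l = i then MM B k l else 0) - MM B k l * B l i := by
      intro l
      by_cases hl : l = i <;> simp [Matrix.sub_apply, Matrix.one_apply, hl] <;> ring
    rw [Finset.sum_congr rfl fun l _ => heach l, Finset.sum_sub_distrib,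
      Finset.sum_ite_eq' Finset.univ i (fun l => MM B k l), if_pos (Finset.mem_univ i)]
  simp only [Pi.sub_apply, mvec, h1]
  have h4 : MM B k i - ∑ l, MM B k l * B l i = (1 : Matrix (Fin p) (Fin p) ℝ) k i := by
    rw [← h3, h2]
  by_cases hk : k = i
  · subst hk
    rw [show Real.sqrt (ω k) * MM B k k - Real.sqrt (ω k) * ∑ l, MM B k l * B l k
        = Real.sqrt (ω k) * (MM B k k - ∑ l, MM B k l * B l k) by ring, h4]
    simp [Matrix.one_apply]
  · rw [show Real.sqrt (ω k) * MM B k i - Real.sqrt (ω k) * ∑ l, MM B k l * B l i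
        = Real.sqrt (ω k) * (MM B k i - ∑ l, MM B k l * B l i) by ring, h4]
    simp [Matrix.one_apply, hk]

lemma evec_mem (hσs : Consistent B σs) {R : Finset (Fin p)} (hR : anc B R)
    {i : Fin p} (hi : i ∈ R) :
    (fun k => if k = i then Real.sqrt (ω i) else 0) ∈ U B ω R := by
  rw [evec_eq hσs i]
  apply Submodule.sub_mem _ (mvec_mem_U hi)
  have hss : ∑ l ∈ R, B l i • mvec B ω l = ∑ l, B l i • mvec B ω l := by
    apply Finset.sum_subset (Finset.subset_univ R)
    intro x _ hx
    have : B x i = 0 := by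
      by_contra h
      exact hx (hR x i h hi)
    simp [this]
  rw [← hss]
  exact Submodule.sum_smul_mem _ _ fun l hl => mvec_mem_U hl

/-- Exact conditional variance on ancestral sets. -/
lemma ANC (hσs : Consistent B σs) (hω : ∀ j, 0 < ω j) {R : Finset (Fin p)} (hR : anc B R)
    {j : Fin p} (hj : j ∈ R) :
    condVar (modelCov B ω) j (R.erase j) = (∑ i ∈ R, ((1 - B) j i)^2 / ω i)⁻¹ := by
  classical
  set K : ℝ := ∑ i ∈ R, ((1 - B) j i)^2 / ω i with hKdef
  have hterm : ∀ i ∈ R, 0 ≤ ((1 - B) j i)^2 / ω i :=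
    fun i _ => div_nonneg (sq_nonneg _) (hω i).le
  have hjterm : ((1 - B) j j)^2 / ω j = 1 / ω j := by
    simp [Matrix.sub_apply, Matrix.one_apply_eq, Bjj hσs]
  have hK0 : 0 < K := by
    have h1 : ((1 - B) j j)^2 / ω j ≤ K := Finset.single_le_sum hterm hj
    rw [hjterm] at h1
    have : 0 < 1 / ω j := one_div_pos.2 (hω j)
    linarith
  have hKne : K ≠ 0 := ne_of_gt hK0
  set ζ : Fin p → ℝ := fun i => if i ∈ R then ((1 - B) j i) / Real.sqrt (ω i) else 0 with hζdef
  have sqrt_ne : ∀ i : Fin p, Real.sqrt (ω i) ≠ 0 := fun i => ne_of_gt (Real.sqrt_pos.2 (hω i))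
  -- ζ against the generators
  have hζm : ∀ a ∈ R, ip ζ (mvec B ω a) = (1 : Matrix (Fin p) (Fin p) ℝ) j a := by
    intro a ha
    unfold ip
    have h1 : ∀ i : Fin p, ζ i * mvec B ω a i
        = if i ∈ R then (1 - B) j i * MM B i a else 0 := by
      intro i
      rw [hζdef, mvec]
      by_cases hiR : i ∈ R
      · simp only [hiR, if_true]
        rw [div_mul_eq_mul_div, show (1 - B) j i * (Real.sqrt (ω i) * MM B i a)
          = ((1 - B) j i * MM B i a) * Real.sqrt (ω i) by ring,
          mul_div_assoc, div_self (sqrt_ne i), mul_one]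
      · simp [hiR]
    rw [Finset.sum_congr rfl fun i _ => h1 i]
    rw [Finset.sum_ite_mem, Finset.univ_inter]
    have h2 : ∑ i ∈ R, (1 - B) j i * MM B i a = ∑ i, (1 - B) j i * MM B i a := by
      apply Finset.sum_subset (Finset.subset_univ R)
      intro x _ hx
      rw [M_zero_of_anc hσs hR hx ha, mul_zero]
    rw [h2]
    have := congrFun (congrFun (hMl hσs) j) a
    simpa [Matrix.mul_apply] using this
  have hζζ : ip ζ ζ = K := by
    unfold ip
    rw [hKdef]
    have h1 : ∀ i : Fin p, ζ i * ζ i = if i ∈ R then ((1 - B) j i)^2 / ω i else 0 := by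
      intro i
      rw [hζdef]
      by_cases hiR : i ∈ R
      · simp only [hiR, if_true]
        rw [div_mul_div_comm, Real.mul_self_sqrt (hω i).le]
        ring
      · simp [hiR]
    rw [Finset.sum_congr rfl fun i _ => h1 i, Finset.sum_ite_mem, Finset.univ_inter]
  have hζU : ζ ∈ U B ω R := by
    have hζsum : ζ = ∑ i ∈ R, (((1 - B) j i) / ω i) •
        (fun k => if k = i then Real.sqrt (ω i) else 0) := by
      funext k
      rw [Finset.sum_apply]
      simp only [Pi.smul_apply, smul_eq_mul, mul_ite, mul_zero]
      rw [Finset.sum_ite_eq R k (fun i => ((1 - B) j i) / ω i * Real.sqrt (ω i))]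
      rw [hζdef]
      by_cases hkR : k ∈ R
      · simp only [hkR, if_true]
        rw [div_mul_eq_mul_div, div_eq_div_iff (sqrt_ne k) (ne_of_gt (hω k))]
        nth_rewrite 1 [(Real.mul_self_sqrt (hω k).le).symm]
        ring
      · simp [hkR]
    rw [hζsum]
    exact Submodule.sum_smul_mem _ _ fun i hi => evec_mem hσs hR hi
  set u : Fin p → ℝ := mvec B ω j - K⁻¹ • ζ with hu
  have huU : u ∈ U B ω R :=
    Submodule.sub_mem _ (mvec_mem_U hj) (Submodule.smul_mem _ _ hζU)
  obtain ⟨f, -, hf⟩ := Submodule.mem_span_finset.1 huU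
  have hinj : ∀ x ∈ R, ∀ y ∈ R, mvec B ω x = mvec B ω y → x = y :=
    fun x _ y _ h => mvec_injective hσs hω h
  have hfsum : u = ∑ a ∈ R, f (mvec B ω a) • mvec B ω a := by
    rw [← hf, Finset.sum_image hinj]
  have hipuζ1 : ip u ζ = 0 := by
    rw [hu, ip_sub_left, ip_smul_left, hζζ, inv_mul_cancel₀ hKne, ip_comm, hζm j hj,
      Matrix.one_apply_eq, sub_self]
  have hipuζ2 : ip u ζ = f (mvec B ω j) := by
    rw [hfsum, ip_sum_left]
    have heach : ∀ a ∈ R, f (mvec B ω a) * ip (mvec B ω a) ζ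
        = if j = a then f (mvec B ω a) else 0 := by
      intro a ha
      rw [ip_comm, hζm a ha, Matrix.one_apply]
      by_cases hja : j = a <;> simp [hja]
    rw [Finset.sum_congr rfl heach, Finset.sum_ite_eq R j (fun a => f (mvec B ω a)), if_pos hj]
  have hfj : f (mvec B ω j) = 0 := by rw [← hipuζ2, hipuζ1]
  have huE : u ∈ U B ω (R.erase j) := by
    have : u = ∑ a ∈ R.erase j, f (mvec B ω a) • mvec B ω a := by
      rw [hfsum, ← Finset.add_sum_erase R _ hj, hfj, zero_smul, zero_add]
    rw [this]
    exact Submodule.sum_smul_mem _ _ fun a ha => mvec_mem_U ha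
  have hres : mvec B ω j - u = K⁻¹ • ζ := by rw [hu]; abel
  have hperp : ∀ x ∈ U B ω (R.erase j), ip x (mvec B ω j - u) = 0 := by
    rw [hres]
    apply perp_U
    intro a ha
    have haj : a ≠ j := (Finset.mem_erase.1 ha).1
    rw [ip_comm, ip_smul_left, hζm a (Finset.mem_of_mem_erase ha),
      Matrix.one_apply_ne (Ne.symm haj), mul_zero]
  rw [condVar_eq_of_perp hσs hω huE hperp, hres, ip_smul_left, ip_comm, ip_smul_left, hζζ]
  field_simp

/-- useful forms of ANC -/
lemma K_split (hσs : Consistent B σs) {R : Finset (Fin p)} {j : Fin p} (hj : j ∈ R) :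
    ∑ i ∈ R, ((1 - B) j i)^2 / ω i = 1 / ω j + ∑ i ∈ R.erase j, (B j i)^2 / ω i := by
  rw [← Finset.add_sum_erase R _ hj]
  congr 1
  · simp [Matrix.sub_apply, Matrix.one_apply_eq, Bjj hσs]
  · apply Finset.sum_congr rfl
    intro i hi
    have hij : i ≠ j := (Finset.mem_erase.1 hi).1
    rw [Matrix.sub_apply, Matrix.one_apply_ne (Ne.symm hij)]
    ring_nf

lemma ANC_eq_omega (hσs : Consistent B σs) (hω : ∀ j, 0 < ω j) {R : Finset (Fin p)}
    (hR : anc B R) {j : Fin p} (hj : j ∈ R) (hnc : ∀ c ∈ R.erase j, B j c = 0) :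
    condVar (modelCov B ω) j (R.erase j) = ω j := by
  rw [ANC hσs hω hR hj, K_split hσs hj]
  rw [Finset.sum_eq_zero fun c hc => by rw [hnc c hc]; ring]
  simp

lemma ANC_lt_omega (hσs : Consistent B σs) (hω : ∀ j, 0 < ω j) {R : Finset (Fin p)}
    (hR : anc B R) {j : Fin p} (hj : j ∈ R) {c : Fin p} (hc : c ∈ R.erase j)
    (hBc : B j c ≠ 0) :
    condVar (modelCov B ω) j (R.erase j) < ω j := by
  rw [ANC hσs hω hR hj, K_split hσs hj]
  have h1 : 0 < (B j c)^2 / ω c := div_pos (by positivity) (hω c)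
  have h2 : 0 < ∑ i ∈ R.erase j, (B j i)^2 / ω i := by
    exact Finset.sum_pos' (fun i _ => div_nonneg (sq_nonneg _) (hω i).le) ⟨c, hc, h1⟩
  have h3 : 1 / ω j < 1 / ω j + ∑ i ∈ R.erase j, (B j i)^2 / ω i := by linarith
  have h4 : 0 < 1 / ω j := one_div_pos.2 (hω j)
  calc (1 / ω j + ∑ i ∈ R.erase j, (B j i)^2 / ω i)⁻¹ < (1 / ω j)⁻¹ :=
        inv_strictAnti₀ h4 h3
    _ = ω j := by simp

/-- positivity of conditional variance -/
lemma condVar_pos (hσs : Consistent B σs) (hω : ∀ j, 0 < ω j)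
    {A : Finset (Fin p)} {j : Fin p} (hjA : j ∉ A) : 0 < condVar (modelCov B ω) j A := by
  have hanc : anc B Finset.univ := fun a b _ _ => Finset.mem_univ a
  have h1 : condVar (modelCov B ω) j A ≥ condVar (modelCov B ω) j (Finset.univ.erase j) := by
    apply condVar_mono hσs hω
    intro x hx
    rw [Finset.mem_erase]
    exact ⟨fun h => hjA (h ▸ hx), Finset.mem_univ x⟩
  have h2 : condVar (modelCov B ω) j (Finset.univ.erase j)
      = (∑ i ∈ Finset.univ, ((1 - B) j i)^2 / ω i)⁻¹ :=
    ANC hσs hω hanc (Finset.mem_univ j)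
  have hterm : ∀ i ∈ Finset.univ, 0 ≤ ((1 - B) j i)^2 / ω i :=
    fun i _ => div_nonneg (sq_nonneg _) (hω i).le
  have hjt : ((1 - B) j j)^2 / ω j = 1 / ω j := by
    simp [Matrix.sub_apply, Matrix.one_apply_eq, Bjj hσs]
  have hK0 : 0 < ∑ i ∈ Finset.univ, ((1 - B) j i)^2 / ω i := by
    have h3 := Finset.single_le_sum hterm (Finset.mem_univ j)
    rw [hjt] at h3
    have : 0 < 1 / ω j := one_div_pos.2 (hω j)
    linarith
  have := inv_pos.2 hK0
  linarith

/-- the two-element exchange identity -/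
lemma swap_identity (hσs : Consistent B σs) (hω : ∀ j, 0 < ω j)
    {C : Finset (Fin p)} {j1 j2 : Fin p} (h1C : j1 ∉ C) (h2C : j2 ∉ C) (hne : j1 ≠ j2) :
    condVar (modelCov B ω) j1 (insert j2 C) * condVar (modelCov B ω) j2 C
      = condVar (modelCov B ω) j2 (insert j1 C) * condVar (modelCov B ω) j1 C := by
  -- compute v(x | insert y C) = v(x|C) - (ip rx ry)^2 / v(y|C)
  have key : ∀ x y : Fin p, x ∉ C → y ∉ C → x ≠ y →
      ∀ ux ∈ U B ω C, ∀ uy ∈ U B ω C,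
      (∀ z ∈ U B ω C, ip z (mvec B ω x - ux) = 0) →
      (∀ z ∈ U B ω C, ip z (mvec B ω y - uy) = 0) →
      condVar (modelCov B ω) x (insert y C) * condVar (modelCov B ω) y C =
        condVar (modelCov B ω) x C * condVar (modelCov B ω) y C
          - (ip (mvec B ω x - ux) (mvec B ω y - uy))^2 := by
    intro x y hxC hyC hxy ux huxmem uy huymem hperpx hperpy
    set rx := mvec B ω x - ux with hrx
    set ry := mvec B ω y - uy with hry
    have hvy : condVar (modelCov B ω) y C = ip ry ry := condVar_eq_of_perp hσs hω huymem hperpy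
    have hvx : condVar (modelCov B ω) x C = ip rx rx := condVar_eq_of_perp hσs hω huxmem hperpx
    have hvy0 : 0 < ip ry ry := by rw [← hvy]; exact condVar_pos hσs hω hyC
    set t : ℝ := ip rx ry / ip ry ry with ht
    set u : Fin p → ℝ := ux + t • ry with hu
    have hryU : ry ∈ U B ω (insert y C) := by
      rw [hry]
      exact Submodule.sub_mem _ (mvec_mem_U (Finset.mem_insert_self y C))
        (U_mono (Finset.subset_insert y C) huymem)
    have huU : u ∈ U B ω (insert y C) := by
      rw [hu]
      exact Submodule.add_mem _ (U_mono (Finset.subset_insert y C) huxmem)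
        (Submodule.smul_mem _ _ hryU)
    have hres : mvec B ω x - u = rx - t • ry := by rw [hu, hrx]; abel
    have hperp : ∀ z ∈ U B ω (insert y C), ip z (mvec B ω x - u) = 0 := by
      rw [hres]
      apply perp_U
      intro a ha
      rcases Finset.mem_insert.1 ha with rfl | haC
      · -- a = y
        have hm : mvec B ω a = ry + uy := by rw [hry]; abel
        have A1 : ip rx (ry + uy) = ip ry rx + ip uy rx := by
          rw [ip_comm, ip_add_left]
        have A2 : ip (t • ry) (ry + uy) = t * (ip ry ry + ip uy ry) := by
          rw [ip_smul_left, ip_comm ry (ry + uy), ip_add_left, ip_comm uy ry, ip_comm ry ry]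
        rw [hm, ip_comm, ip_sub_left, A1, A2, hperpx uy huymem, hperpy uy huymem, ht,
          ip_comm ry rx]
        field_simp
        ring
      · have A1 : ip rx (mvec B ω a) = 0 := by
          rw [ip_comm]; exact hperpx _ (mvec_mem_U haC)
        have A2 : ip ry (mvec B ω a) = 0 := by
          rw [ip_comm]; exact hperpy _ (mvec_mem_U haC)
        rw [ip_comm, ip_sub_left, ip_smul_left, A1, A2]
        ring
    have hval : condVar (modelCov B ω) x (insert y C) = ip (rx - t • ry) (rx - t • ry) := by
      rw [← hres]
      exact condVar_eq_of_perp hσs hω huU hperp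
    have hexp : ip (rx - t • ry) (rx - t • ry)
        = ip rx rx - 2 * t * ip rx ry + t^2 * ip ry ry := by
      rw [show ip (rx - t • ry) (rx - t • ry)
          = ip rx (rx - t • ry) - t * ip ry (rx - t • ry) from by
        rw [ip_sub_left, ip_smul_left]]
      rw [ip_comm rx _, ip_comm ry _]
      simp only [ip_sub_left, ip_smul_left]
      have hc : ip ry rx = ip rx ry := ip_comm ry rx
      rw [hc]
      ring
    rw [hval, hexp, hvy, hvx, ht]
    field_simp
    ring
  obtain ⟨u1, hu1mem, hperp1, _⟩ := exists_opt hσs hω C j1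
  obtain ⟨u2, hu2mem, hperp2, _⟩ := exists_opt hσs hω C j2
  have e1 := key j1 j2 h1C h2C hne u1 hu1mem u2 hu2mem hperp1 hperp2
  have e2 := key j2 j1 h2C h1C (Ne.symm hne) u2 hu2mem u1 hu1mem hperp2 hperp1
  rw [e1, e2, ip_comm]
  ring

lemma mem_PRED {τ : Equiv.Perm (Fin p)} {i j : Fin p} :
    i ∈ PRED τ j ↔ τ.symm i < τ.symm j := by
  simp [PRED]

/-- peeling at a τ-maximal element -/
lemma inter_PRED_max {τ : Equiv.Perm (Fin p)} {R : Finset (Fin p)} {j : Fin p}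
    (hjR : j ∈ R) (hmax : ∀ i ∈ R, τ.symm i ≤ τ.symm j) :
    R ∩ PRED τ j = R.erase j := by
  ext x
  simp only [Finset.mem_inter, Finset.mem_erase, mem_PRED]
  constructor
  · rintro ⟨hxR, hlt⟩
    exact ⟨fun h => by subst h; exact lt_irrefl _ hlt, hxR⟩
  · rintro ⟨hxj, hxR⟩
    refine ⟨hxR, lt_of_le_of_ne (hmax x hxR) ?_⟩
    intro h
    exact hxj (τ.symm.injective h)

lemma inter_PRED_erase {τ : Equiv.Perm (Fin p)} {R : Finset (Fin p)} {j : Fin p}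
    (hmax : ∀ i ∈ R, τ.symm i ≤ τ.symm j) {i : Fin p} (hi : i ∈ R.erase j) :
    R ∩ PRED τ i = (R.erase j) ∩ PRED τ i := by
  ext x
  simp only [Finset.mem_inter, Finset.mem_erase, mem_PRED]
  constructor
  · rintro ⟨hxR, hlt⟩
    refine ⟨⟨?_, hxR⟩, hlt⟩
    rintro rfl
    have hiR := (Finset.mem_erase.1 hi).2
    exact absurd (lt_of_le_of_lt (hmax i hiR) hlt) (by
      have := hmax x hxR
      exact not_lt.2 (le_refl _) ∘ fun hh => hh)
  · rintro ⟨⟨_, hxR⟩, hlt⟩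
    exact ⟨hxR, hlt⟩

/-- canonical product peels at the σs-maximal element -/
lemma canon_max (hσs : Consistent B σs) {R : Finset (Fin p)} {s : Fin p}
    (hsR : s ∈ R) (hmax : ∀ i ∈ R, σs.symm i ≤ σs.symm s) :
    canon B ω σs R = condVar (modelCov B ω) s (R.erase s) * canon B ω σs (R.erase s) := by
  rw [canon, ← Finset.mul_prod_erase R _ hsR, inter_PRED_max hsR hmax]
  congr 1
  apply Finset.prod_congr rfl
  intro i hi
  rw [inter_PRED_erase hmax hi]

/-- canonical product peels at ANY element -/
lemma canon_peel (hσs : Consistent B σs) (hω : ∀ j, 0 < ω j) :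
    ∀ (R : Finset (Fin p)), ∀ j ∈ R,
      canon B ω σs R = condVar (modelCov B ω) j (R.erase j) * canon B ω σs (R.erase j) := by
  intro R
  induction R using Finset.strongInduction with
  | _ R ih =>
    intro j hjR
    obtain ⟨s, hsR, hmax⟩ := Finset.exists_max_image R σs.symm ⟨j, hjR⟩
    by_cases hjs : j = s
    · subst hjs
      exact canon_max hσs hjR hmax
    · have hsRj : s ∈ R.erase j := Finset.mem_erase.2 ⟨fun h => hjs h.symm, hsR⟩
      have hjRs : j ∈ R.erase s := Finset.mem_erase.2 ⟨hjs, hjR⟩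
      have hE : (R.erase s).erase j = (R.erase j).erase s := Finset.erase_right_comm
      have hCj : insert s ((R.erase j).erase s) = R.erase j := Finset.insert_erase hsRj
      have hCs : insert j ((R.erase j).erase s) = R.erase s := by
        rw [← hE]
        exact Finset.insert_erase hjRs
      have hjC : j ∉ (R.erase j).erase s :=
        fun h => (Finset.mem_erase.1 (Finset.mem_of_mem_erase h)).1 rfl
      have hsC : s ∉ (R.erase j).erase s := fun h => (Finset.mem_erase.1 h).1 rfl
      have hmax' : ∀ i ∈ R.erase j, σs.symm i ≤ σs.symm s :=
        fun i hi => hmax i (Finset.mem_of_mem_erase hi)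
      -- expansions
      have E1 : canon B ω σs R
          = condVar (modelCov B ω) s (R.erase s) * canon B ω σs (R.erase s) :=
        canon_max hσs hsR hmax
      have E2 : canon B ω σs (R.erase s)
          = condVar (modelCov B ω) j ((R.erase s).erase j) * canon B ω σs ((R.erase s).erase j) :=
        ih (R.erase s) (Finset.erase_ssubset hsR) j hjRs
      have E3 : canon B ω σs (R.erase j)
          = condVar (modelCov B ω) s ((R.erase j).erase s) * canon B ω σs ((R.erase j).erase s) :=
        canon_max hσs hsRj fun i hi => hmax i (Finset.mem_of_mem_erase hi)
      have hswap := swap_identity hσs hω hjC hsC hjs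
      rw [hCj, hCs] at hswap
      rw [E1, E2, E3, hE]
      linear_combination (-(canon B ω σs ((R.erase j).erase s))) * hswap
lemma not_mem_PRED_self {τ : Equiv.Perm (Fin p)} {i : Fin p} : i ∉ PRED τ i := by
  rw [mem_PRED]; exact lt_irrefl _

lemma not_mem_inter_PRED_self {τ : Equiv.Perm (Fin p)} {R : Finset (Fin p)} {i : Fin p} :
    i ∉ R ∩ PRED τ i := fun h => not_mem_PRED_self (Finset.mem_inter.1 h).2

lemma wf_pos (hσs : Consistent B σs) (hω : ∀ j, 0 < ω j) (i : Fin p) :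
    0 < wf B ω σs i := condVar_pos hσs hω not_mem_PRED_self

lemma wf_le_df (hσs : Consistent B σs) (hω : ∀ j, 0 < ω j) (R : Finset (Fin p)) (i : Fin p) :
    wf B ω σs i ≤ df B ω σs R i :=
  condVar_mono hσs hω (Finset.inter_subset_right) i

lemma df_pos (hσs : Consistent B σs) (hω : ∀ j, 0 < ω j) (R : Finset (Fin p)) (i : Fin p) :
    0 < df B ω σs R i := lt_of_lt_of_le (wf_pos hσs hω i) (wf_le_df hσs hω R i)

lemma df_mono (hσs : Consistent B σs) (hω : ∀ j, 0 < ω j) {R R' : Finset (Fin p)}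
    (h : R' ⊆ R) (i : Fin p) : df B ω σs R i ≤ df B ω σs R' i :=
  condVar_mono hσs hω (Finset.inter_subset_inter h (Finset.Subset.refl _)) i

lemma df_erase_eq (hσs : Consistent B σs) {R : Finset (Fin p)} {i j : Fin p}
    (hj : j ∉ PRED σs i) : df B ω σs (R.erase j) i = df B ω σs R i := by
  unfold df
  congr 1
  ext x
  simp only [Finset.mem_inter, Finset.mem_erase]
  constructor
  · rintro ⟨⟨_, hxR⟩, hP⟩; exact ⟨hxR, hP⟩
  · rintro ⟨hxR, hP⟩
    exact ⟨⟨fun h => hj (h ▸ hP), hxR⟩, hP⟩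

lemma canon_eq_prod_df : canon B ω σs R = ∏ i ∈ R, df B ω σs R i := rfl

/-- CLAIM L: fundamental lower bound for arbitrary orderings -/
lemma claimL (hσs : Consistent B σs) (hω : ∀ j, 0 < ω j)
    (hmono : ∀ i j : Fin p, σs.symm i < σs.symm j → wf B ω σs i ≤ wf B ω σs j) :
    ∀ (R : Finset (Fin p)) (τ : Equiv.Perm (Fin p)),
      ∑ i ∈ R, (wf B ω σs i + wf B ω σs i * Real.log (df B ω σs R i / wf B ω σs i))
        ≤ ∑ i ∈ R, condVar (modelCov B ω) i (R ∩ PRED τ i) := by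
  intro R
  induction R using Finset.strongInduction with
  | _ R ih =>
    intro τ
    rcases Finset.eq_empty_or_nonempty R with rfl | hRne
    · simp
    obtain ⟨j, hjR, hmaxτ⟩ := Finset.exists_max_image R τ.symm hRne
    set R₀ := R.erase j with hR₀
    set v := condVar (modelCov B ω) j R₀ with hv
    -- decompose the RHS
    have hRHS : ∑ i ∈ R, condVar (modelCov B ω) i (R ∩ PRED τ i)
        = v + ∑ i ∈ R₀, condVar (modelCov B ω) i (R₀ ∩ PRED τ i) := by
      rw [← Finset.add_sum_erase R _ hjR, inter_PRED_max hjR hmaxτ, ← hR₀, ← hv]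
      congr 1
      apply Finset.sum_congr rfl
      intro i hi
      rw [inter_PRED_erase hmaxτ hi]
    have hIH := ih R₀ (Finset.erase_ssubset hjR) τ
    -- positivity facts
    have hwpos : ∀ i : Fin p, 0 < wf B ω σs i := wf_pos hσs hω
    have hdRpos : ∀ i : Fin p, 0 < df B ω σs R i := df_pos hσs hω R
    have hdR₀pos : ∀ i : Fin p, 0 < df B ω σs R₀ i := df_pos hσs hω R₀
    have hdle : ∀ i : Fin p, df B ω σs R i ≤ df B ω σs R₀ i :=
      df_mono hσs hω (Finset.erase_subset j R)
    -- the product identity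
    set SS := ∑ i ∈ R₀, (Real.log (df B ω σs R₀ i) - Real.log (df B ω σs R i)) with hSS
    have hvexp : v = df B ω σs R j * Real.exp (-SS) := by
      have hpeel := canon_peel hσs hω R j hjR
      have hcanR : canon B ω σs R = df B ω σs R j * ∏ i ∈ R₀, df B ω σs R i := by
        rw [canon_eq_prod_df, ← Finset.mul_prod_erase R _ hjR]
      have hcanR₀ : canon B ω σs R₀ = ∏ i ∈ R₀, df B ω σs R₀ i := rfl
      have hPpos : 0 < ∏ i ∈ R₀, df B ω σs R i := Finset.prod_pos fun i _ => hdRpos i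
      have hQpos : 0 < ∏ i ∈ R₀, df B ω σs R₀ i := Finset.prod_pos fun i _ => hdR₀pos i
      have hexpSS : Real.exp (-SS) = (∏ i ∈ R₀, df B ω σs R i) / ∏ i ∈ R₀, df B ω σs R₀ i := by
        rw [hSS, Finset.sum_sub_distrib, neg_sub,
          ← Real.log_prod (fun i _ => ne_of_gt (hdRpos i)),
          ← Real.log_prod (fun i _ => ne_of_gt (hdR₀pos i)),
          ← Real.log_div (ne_of_gt hPpos) (ne_of_gt hQpos),
          Real.exp_log (div_pos hPpos hQpos)]
      rw [hexpSS]
      rw [hcanR, hcanR₀, ← hv] at hpeel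
      field_simp [ne_of_gt hQpos]
      linarith [hpeel]
    -- the j-term inequality
    have hstar : wf B ω σs j + wf B ω σs j * Real.log (df B ω σs R j / wf B ω σs j)
        ≤ v + wf B ω σs j * SS := by
      set L := Real.log (df B ω σs R j / wf B ω σs j) with hL
      have hDfj : df B ω σs R j = wf B ω σs j * Real.exp L := by
        rw [hL, Real.exp_log (div_pos (hdRpos j) (hwpos j))]
        field_simp [ne_of_gt (hwpos j)]
      have h1 : (L - SS) + 1 ≤ Real.exp (L - SS) := Real.add_one_le_exp _
      have h2 : v = wf B ω σs j * Real.exp (L - SS) := by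
        rw [hvexp, hDfj, Real.exp_sub, Real.exp_neg]
        ring_nf
      rw [h2]
      have h3 := mul_le_mul_of_nonneg_left h1 (hwpos j).le
      nlinarith [h3]
    -- the per-term inequality on R₀
    have hstep : ∀ i ∈ R₀,
        wf B ω σs i + wf B ω σs i * Real.log (df B ω σs R i / wf B ω σs i)
          + wf B ω σs j * (Real.log (df B ω σs R₀ i) - Real.log (df B ω σs R i))
        ≤ wf B ω σs i + wf B ω σs i * Real.log (df B ω σs R₀ i / wf B ω σs i) := by
      intro i hi
      have hlogR : Real.log (df B ω σs R i / wf B ω σs i)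
          = Real.log (df B ω σs R i) - Real.log (wf B ω σs i) :=
        Real.log_div (ne_of_gt (hdRpos i)) (ne_of_gt (hwpos i))
      have hlogR₀ : Real.log (df B ω σs R₀ i / wf B ω σs i)
          = Real.log (df B ω σs R₀ i) - Real.log (wf B ω σs i) :=
        Real.log_div (ne_of_gt (hdR₀pos i)) (ne_of_gt (hwpos i))
      rw [hlogR, hlogR₀]
      have hΔ : 0 ≤ Real.log (df B ω σs R₀ i) - Real.log (df B ω σs R i) := by
        have := Real.log_le_log (hdRpos i) (hdle i)
        linarith
      by_cases hjP : j ∈ PRED σs i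
      · have hwji : wf B ω σs j ≤ wf B ω σs i := hmono _ _ (mem_PRED.1 hjP)
        nlinarith [mul_le_mul_of_nonneg_right hwji hΔ]
      · have heq : df B ω σs R₀ i = df B ω σs R i := df_erase_eq hσs hjP
        rw [heq]
        ring_nf
        exact le_refl _
    -- sum up
    have hsum : ∑ i ∈ R₀, (wf B ω σs i + wf B ω σs i * Real.log (df B ω σs R i / wf B ω σs i))
          + wf B ω σs j * SS
        ≤ ∑ i ∈ R₀, (wf B ω σs i + wf B ω σs i * Real.log (df B ω σs R₀ i / wf B ω σs i)) := by
      rw [hSS, Finset.mul_sum, ← Finset.sum_add_distrib]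
      exact Finset.sum_le_sum hstep
    -- conclude
    rw [hRHS, ← Finset.add_sum_erase R _ hjR, ← hR₀]
    calc wf B ω σs j + wf B ω σs j * Real.log (df B ω σs R j / wf B ω σs j)
          + ∑ i ∈ R₀, (wf B ω σs i + wf B ω σs i * Real.log (df B ω σs R i / wf B ω σs i))
        ≤ (v + wf B ω σs j * SS)
          + ∑ i ∈ R₀, (wf B ω σs i + wf B ω σs i * Real.log (df B ω σs R i / wf B ω σs i)) := by
          linarith [hstar]
      _ ≤ v + ∑ i ∈ R₀, (wf B ω σs i + wf B ω σs i * Real.log (df B ω σs R₀ i / wf B ω σs i)) := by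
          linarith [hsum]
      _ ≤ v + ∑ i ∈ R₀, condVar (modelCov B ω) i (R₀ ∩ PRED τ i) := by
          linarith [hIH]
lemma PRED_eq (τ : Equiv.Perm (Fin p)) (x : Fin p) :
    PRED τ x = (Finset.univ.filter fun y => τ.symm y ≤ τ.symm x).erase x := by
  ext y
  simp only [mem_PRED, Finset.mem_erase, Finset.mem_filter, Finset.mem_univ, true_and]
  constructor
  · intro h
    exact ⟨fun hyx => by subst hyx; exact lt_irrefl _ h, h.le⟩
  · rintro ⟨hne, hle⟩
    exact lt_of_le_of_ne hle fun h => hne (τ.symm.injective h)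

lemma anc_inter {R R' : Finset (Fin p)} (h : anc B R) (h' : anc B R') : anc B (R ∩ R') :=
  fun a b hab hb => Finset.mem_inter.2
    ⟨h a b hab (Finset.mem_inter.1 hb).1, h' a b hab (Finset.mem_inter.1 hb).2⟩

lemma anc_le_σs (hσs : Consistent B σs) (i : Fin p) :
    anc B (Finset.univ.filter fun x => σs.symm x ≤ σs.symm i) := by
  intro a b hab hb
  simp only [Finset.mem_filter, Finset.mem_univ, true_and] at hb ⊢
  exact le_trans (hσs a b hab).le hb

lemma wf_eq_omega (hσs : Consistent B σs) (hω : ∀ j, 0 < ω j) (i : Fin p) :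
    wf B ω σs i = ω i := by
  have hmem : i ∈ Finset.univ.filter fun x => σs.symm x ≤ σs.symm i := by simp
  have h := ANC_eq_omega hσs hω (anc_le_σs hσs i) hmem (fun c hc => ?_)
  · rw [wf, PRED_eq σs i]
    exact h
  · by_contra hBc
    have h1 := hσs i c hBc
    have h2 := Finset.mem_erase.1 hc
    have h3 := (Finset.mem_filter.1 h2.2).2
    exact absurd (lt_of_lt_of_le h1 h3) (lt_irrefl _)

lemma df_eq_omega (hσs : Consistent B σs) (hω : ∀ j, 0 < ω j) {R : Finset (Fin p)}
    (hRanc : anc B R) {i : Fin p} (hi : i ∈ R) : df B ω σs R i = ω i := by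
  set R'' := R ∩ (Finset.univ.filter fun x => σs.symm x ≤ σs.symm i) with hR''
  have hanc : anc B R'' := anc_inter hRanc (anc_le_σs hσs i)
  have hiR'' : i ∈ R'' := Finset.mem_inter.2 ⟨hi, by simp⟩
  have hset : R''.erase i = R ∩ PRED σs i := by
    ext x
    simp only [hR'', Finset.mem_erase, Finset.mem_inter, Finset.mem_filter, Finset.mem_univ,
      true_and, mem_PRED]
    constructor
    · rintro ⟨hne, hxR, hle⟩
      exact ⟨hxR, lt_of_le_of_ne hle fun h => hne (σs.symm.injective h)⟩
    · rintro ⟨hxR, hlt⟩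
      exact ⟨fun h => by subst h; exact lt_irrefl _ hlt, hxR, hlt.le⟩
  have h := ANC_eq_omega hσs hω hanc hiR'' (fun c hc => ?_)
  · rw [df, ← hset]
    exact h
  · by_contra hBc
    have h1 := hσs i c hBc
    rw [hset] at hc
    have h2 := (Finset.mem_inter.1 hc).2
    rw [mem_PRED] at h2
    exact absurd (lt_trans h1 h2) (lt_irrefl _)

theorem main {p : ℕ} (B : Matrix (Fin p) (Fin p) ℝ) (ω : Fin p → ℝ)
    (hω : ∀ j, 0 < ω j)
    (σs : Equiv.Perm (Fin p)) (hσs : Consistent B σs)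
    (hinc : Monotone fun k =>
      condVar (modelCov B ω) (σs k) (PRED σs (σs k)))
    (σ : Equiv.Perm (Fin p)) (hσ : ¬ Consistent B σ) :
    ∑ j, condVar (modelCov B ω) j (PRED σs j) <
      ∑ j, condVar (modelCov B ω) j (PRED σ j) := by
  classical
  -- monotonicity of wf along σs
  have hmono : ∀ i j : Fin p, σs.symm i < σs.symm j → wf B ω σs i ≤ wf B ω σs j := by
    intro i j hij
    have h := hinc hij.le
    simpa [wf] using h
  have hwω : ∀ i, wf B ω σs i = ω i := wf_eq_omega hσs hω
  -- find the maximal violator j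
  rw [Consistent] at hσ
  push_neg at hσ
  obtain ⟨a0, b0, hB0, hnlt⟩ := hσ
  have hab : a0 ≠ b0 := by
    rintro rfl
    exact absurd (hσs _ _ hB0) (lt_irrefl _)
  have hb0a0 : σ.symm b0 < σ.symm a0 :=
    lt_of_le_of_ne hnlt fun h => hab (σ.symm.injective h.symm)
  set T := Finset.univ.filter (fun u => ∃ v, B u v ≠ 0 ∧ σ.symm v < σ.symm u) with hT
  have hTne : T.Nonempty := ⟨a0, by
    simp only [hT, Finset.mem_filter, Finset.mem_univ, true_and]
    exact ⟨b0, hB0, hb0a0⟩⟩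
  obtain ⟨j, hjT, hjmax⟩ := Finset.exists_max_image T σ.symm hTne
  obtain ⟨c, hBc, hcj⟩ : ∃ v, B j v ≠ 0 ∧ σ.symm v < σ.symm j := by
    simpa [hT] using hjT
  set R := Finset.univ.filter (fun x => σ.symm x ≤ σ.symm j) with hR
  have hjR : j ∈ R := by simp [hR]
  -- all "suffix" sets are ancestral
  have hanc_k : ∀ k : Fin p, σ.symm j ≤ σ.symm k →
      anc B (Finset.univ.filter fun x => σ.symm x ≤ σ.symm k) := by
    intro k hk a b hBab hbmem
    simp only [Finset.mem_filter, Finset.mem_univ, true_and] at hbmem ⊢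
    by_cases h : σ.symm a < σ.symm b
    · exact le_trans h.le hbmem
    · have hne : a ≠ b := by
        rintro rfl
        exact absurd (hσs _ _ hBab) (lt_irrefl _)
      have hba : σ.symm b < σ.symm a :=
        lt_of_le_of_ne (not_lt.1 h) fun h' => hne (σ.symm.injective h'.symm)
      have haT : a ∈ T := by
        simp only [hT, Finset.mem_filter, Finset.mem_univ, true_and]
        exact ⟨b, hBab, hba⟩
      exact le_trans (hjmax a haT) hk
  have hRanc : anc B R := hanc_k j (le_refl _)
  -- suffix terms are exactly ω
  have hsuffix : ∀ x : Fin p, σ.symm j < σ.symm x →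
      condVar (modelCov B ω) x (PRED σ x) = ω x := by
    intro x hx
    have hanc := hanc_k x hx.le
    have hxmem : x ∈ Finset.univ.filter (fun y => σ.symm y ≤ σ.symm x) := by simp
    have h := ANC_eq_omega hσs hω hanc hxmem (fun cc hcc => ?_)
    · rw [PRED_eq σ x]
      exact h
    · by_contra hBcc
      have h2 := Finset.mem_erase.1 hcc
      have h3 := (Finset.mem_filter.1 h2.2).2
      have hccx : σ.symm cc < σ.symm x :=
        lt_of_le_of_ne h3 fun h' => h2.1 (σ.symm.injective h')
      have hxT : x ∈ T := by
        simp only [hT, Finset.mem_filter, Finset.mem_univ, true_and]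
        exact ⟨cc, hBcc, hccx⟩
      exact absurd hx (not_lt.2 (hjmax x hxT))
  -- j's own term
  have hPREDj : PRED σ j = R.erase j := PRED_eq σ j
  set vj := condVar (modelCov B ω) j (R.erase j) with hvj
  have hcnej : c ≠ j := by
    rintro rfl
    exact absurd hcj (lt_irrefl _)
  have hcRj : c ∈ R.erase j :=
    Finset.mem_erase.2 ⟨hcnej, by simp [hR]; exact hcj.le⟩
  have hvj_lt : vj < ω j := ANC_lt_omega hσs hω hRanc hjR hcRj hBc
  have hvj_pos : 0 < vj := condVar_pos hσs hω (Finset.notMem_erase j R)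
  -- dd on R
  have hdfR : ∀ i ∈ R, df B ω σs R i = ω i := fun i hi => df_eq_omega hσs hω hRanc hi
  -- identify the claimL conditioning sets on R.erase j
  have hR₀sets : ∀ i ∈ R.erase j, (R.erase j) ∩ PRED σ i = PRED σ i := by
    intro i hi
    apply Finset.inter_eq_right.2
    intro x hx
    rw [mem_PRED] at hx
    have hiR := Finset.mem_erase.1 hi
    have hile : σ.symm i ≤ σ.symm j := (Finset.mem_filter.1 hiR.2).2
    have hilt : σ.symm i < σ.symm j :=
      lt_of_le_of_ne hile fun h' => hiR.1 (σ.symm.injective h')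
    refine Finset.mem_erase.2 ⟨?_, ?_⟩
    · intro hxj
      subst hxj
      exact absurd (lt_trans hx hilt) (lt_irrefl _)
    · simp only [hR, Finset.mem_filter, Finset.mem_univ, true_and]
      exact (lt_trans hx hilt).le
  have hclaim0 := claimL hσs hω hmono (R.erase j) σ
  have hclaim : ∑ i ∈ R.erase j, (wf B ω σs i + wf B ω σs i *
        Real.log (df B ω σs (R.erase j) i / wf B ω σs i))
      ≤ ∑ i ∈ R.erase j, condVar (modelCov B ω) i (PRED σ i) := by
    refine le_trans hclaim0 (le_of_eq ?_)
    apply Finset.sum_congr rfl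
    intro i hi
    rw [hR₀sets i hi]
  -- weighted log bound
  have hwj_pos := wf_pos hσs hω j
  have hlogsum : wf B ω σs j *
        ∑ i ∈ R.erase j, Real.log (df B ω σs (R.erase j) i / wf B ω σs i)
      ≤ ∑ i ∈ R.erase j, wf B ω σs i *
        Real.log (df B ω σs (R.erase j) i / wf B ω σs i) := by
    rw [Finset.mul_sum]
    apply Finset.sum_le_sum
    intro i hi
    have hlog0 : 0 ≤ Real.log (df B ω σs (R.erase j) i / wf B ω σs i) :=
      Real.log_nonneg ((one_le_div (wf_pos hσs hω i)).2 (wf_le_df hσs hω _ i))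
    by_cases hjP : j ∈ PRED σs i
    · exact mul_le_mul_of_nonneg_right (hmono j i (mem_PRED.1 hjP)) hlog0
    · have heq : df B ω σs (R.erase j) i = df B ω σs R i := df_erase_eq hσs hjP
      rw [heq, hdfR i (Finset.mem_of_mem_erase hi), ← hwω i,
        div_self (ne_of_gt (wf_pos hσs hω i)), Real.log_one, mul_zero, mul_zero]
  -- value of the log sum
  have hPpos : 0 < ∏ i ∈ R.erase j, ω i := Finset.prod_pos fun i _ => hω i
  have hsumlog : ∑ i ∈ R.erase j, Real.log (df B ω σs (R.erase j) i / wf B ω σs i)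
      = Real.log (ω j) - Real.log vj := by
    have hdpos : ∀ i : Fin p, 0 < df B ω σs (R.erase j) i := df_pos hσs hω _
    have h1 : ∀ i ∈ R.erase j, Real.log (df B ω σs (R.erase j) i / wf B ω σs i)
        = Real.log (df B ω σs (R.erase j) i) - Real.log (ω i) := by
      intro i _
      rw [Real.log_div (ne_of_gt (hdpos i)) (ne_of_gt (wf_pos hσs hω i)), hwω i]
    rw [Finset.sum_congr rfl h1, Finset.sum_sub_distrib,
      ← Real.log_prod (fun i _ => ne_of_gt (hdpos i)),
      ← Real.log_prod (fun i _ => ne_of_gt (hω i))]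
    have hpeel := canon_peel hσs hω R j hjR
    have hcanR : canon B ω σs R = ω j * ∏ i ∈ R.erase j, ω i := by
      rw [canon, ← Finset.mul_prod_erase R _ hjR]
      rw [show condVar (modelCov B ω) j (R ∩ PRED σs j) = df B ω σs R j from rfl,
        hdfR j hjR]
      congr 1
      apply Finset.prod_congr rfl
      intro i hi
      rw [show condVar (modelCov B ω) i (R ∩ PRED σs i) = df B ω σs R i from rfl,
        hdfR i (Finset.mem_of_mem_erase hi)]
    have hcanR₀ : canon B ω σs (R.erase j) = ∏ i ∈ R.erase j, df B ω σs (R.erase j) i := rfl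
    rw [hcanR, hcanR₀, ← hvj] at hpeel
    have hQpos : 0 < ∏ i ∈ R.erase j, df B ω σs (R.erase j) i :=
      Finset.prod_pos fun i _ => hdpos i
    have hlogeq : Real.log (∏ i ∈ R.erase j, df B ω σs (R.erase j) i)
        = Real.log (ω j) + Real.log (∏ i ∈ R.erase j, ω i) - Real.log vj := by
      have : (∏ i ∈ R.erase j, df B ω σs (R.erase j) i) = ω j * (∏ i ∈ R.erase j, ω i) / vj := by
        rw [eq_div_iff (ne_of_gt hvj_pos)]
        linarith [hpeel]
      rw [this, Real.log_div (ne_of_gt (mul_pos (hω j) hPpos)) (ne_of_gt hvj_pos),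
        Real.log_mul (ne_of_gt (hω j)) (ne_of_gt hPpos)]
    rw [hlogeq]
    ring
  -- final computation: split both sums over R / not R
  have hsplit : ∀ f : Fin p → ℝ, ∑ x, f x
      = (∑ x ∈ R, f x) + ∑ x ∈ Finset.univ.filter (fun x => ¬ σ.symm x ≤ σ.symm j), f x := by
    intro f
    rw [hR, ← Finset.sum_filter_add_sum_filter_not Finset.univ (fun x => σ.symm x ≤ σ.symm j) f]
  have hRsum : ∀ f : Fin p → ℝ, ∑ x ∈ R, f x = f j + ∑ x ∈ R.erase j, f x :=
    fun f => (Finset.add_sum_erase R f hjR).symm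
  -- LHS = ∑ ω
  have hLHS : ∑ x, condVar (modelCov B ω) x (PRED σs x) = ∑ x, ω x := by
    apply Finset.sum_congr rfl
    intro x _
    rw [show condVar (modelCov B ω) x (PRED σs x) = wf B ω σs x from rfl, hwω x]
  rw [hLHS]
  -- RHS ≥ pieces
  rw [hsplit (fun x => condVar (modelCov B ω) x (PRED σ x)), hsplit ω, hRsum ω,
    hRsum (fun x => condVar (modelCov B ω) x (PRED σ x))]
  have hsuffix_sum : ∑ x ∈ Finset.univ.filter (fun x => ¬ σ.symm x ≤ σ.symm j),
      condVar (modelCov B ω) x (PRED σ x)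
      = ∑ x ∈ Finset.univ.filter (fun x => ¬ σ.symm x ≤ σ.symm j), ω x := by
    apply Finset.sum_congr rfl
    intro x hx
    have := (Finset.mem_filter.1 hx).2
    exact hsuffix x (not_le.1 this)
  rw [hsuffix_sum, hPREDj, ← hvj]
  -- remaining: ω j + ∑_{R₀} ω < vj + ∑_{R₀} condVar (PRED σ)
  have hwsum : ∑ i ∈ R.erase j, wf B ω σs i = ∑ i ∈ R.erase j, ω i :=
    Finset.sum_congr rfl fun i _ => hwω i
  have hstrict : ω j < vj + ω j * (Real.log (ω j) - Real.log vj) := by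
    have hx : Real.log (vj / ω j) < vj / ω j - 1 :=
      Real.log_lt_sub_one_of_pos (div_pos hvj_pos (hω j)) (by
        intro h
        have h' : vj = ω j := by
          rw [div_eq_iff (ne_of_gt (hω j))] at h
          simpa using h
        exact absurd h' (ne_of_lt hvj_lt))
    rw [Real.log_div (ne_of_gt hvj_pos) (ne_of_gt (hω j))] at hx
    have h2 := mul_lt_mul_of_pos_left hx (hω j)
    have h3 : ω j * (vj / ω j) = vj := by
      rw [mul_comm, div_mul_cancel₀ vj (ne_of_gt (hω j))]
    nlinarith [h2, h3]
  have hfinal : ∑ i ∈ R.erase j, (wf B ω σs i + wf B ω σs i *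
        Real.log (df B ω σs (R.erase j) i / wf B ω σs i))
      ≥ ∑ i ∈ R.erase j, ω i + ω j * (Real.log (ω j) - Real.log vj) := by
    rw [Finset.sum_add_distrib, hwsum]
    have := hlogsum
    rw [hsumlog] at this
    rw [hwω j] at this
    linarith [this]
  linarith [hclaim, hfinal, hstrict]
end S11

/-- In a Gaussian linear SEM with true DAG `G*` (encoded by `B`), true causal ordering
`σ*`, and error variances weakly increasing with respect to `σ*`, every permutation `σ`
not consistent with `G*` has strictly larger total error variance than `σ*`; i.e. the
minimum-trace permutations are exactly the orderings consistent with `G*`. -/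
theorem stmt11 {p : ℕ} (B : Matrix (Fin p) (Fin p) ℝ) (ω : Fin p → ℝ)
    (hω : ∀ j, 0 < ω j)
    (σs : Equiv.Perm (Fin p)) (hσs : Consistent B σs)
    (hinc : Monotone fun k =>
      condVar (modelCov B ω) (σs k) (PRED σs (σs k)))
    (σ : Equiv.Perm (Fin p)) (hσ : ¬ Consistent B σ) :
    ∑ j, condVar (modelCov B ω) j (PRED σs j) <
      ∑ j, condVar (modelCov B ω) j (PRED σ j) :=
  S11.main B ω hω σs hσs hinc σ hσ
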